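/- In the process calculus with only prefix iteration as source of infinite behaviour, every infinite transition sequence is eventually constant: if P₀ →α₀ P₁ →α₁ P₂ → ⋯ is an infinite sequence of transitions between process expressions, then there exists j such that Pₖ = Pₗ for all k, ℓ ≥ j. -/

import Mathlib

/-- Process expressions: inaction, prefix, choice, interleaving parallel composition,
and iteration prefix. Labels are `Option A`, with `none` playing the role of τ. -/
inductive PExp (A : Type) : Type
  | nil : PExp A
  | pre : Option A → PExp A → PExp A
  | choice : PExp A → PExp A → PExp A
  | par : PExp A → PExp A → PExp A
  | star : Option A → PExp A → PExp A

namespace PExp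

/-- The labelled transition relation. -/
inductive Step {A : Type} : PExp A → Option A → PExp A → Prop
  | pre (α : Option A) (P : PExp A) : Step (PExp.pre α P) α P
  | choiceL {P α P'} (Q) : Step P α P' → Step (PExp.choice P Q) α P'
  | choiceR {Q α Q'} (P) : Step Q α Q' → Step (PExp.choice P Q) α Q'
  | parL {P α P'} (Q) : Step P α P' → Step (PExp.par P Q) α (PExp.par P' Q)
  | parR {Q α Q'} (P) : Step Q α Q' → Step (PExp.par P Q) α (PExp.par P Q')
  | star (α : Option A) (P : PExp A) : Step (PExp.star α P) α (PExp.star α P)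
  | starStep {P β P'} (α) : Step P β P' → Step (PExp.star α P) β P'

/-- P ⇒ Q : zero or more τ-steps. -/
def TauSteps {A : Type} (P Q : PExp A) : Prop :=
  Relation.ReflTransGen (fun X Y => Step X none Y) P Q

/-- P (→α) Q or (α = τ and P = Q). -/
def OptStep {A : Type} (P : PExp A) (α : Option A) (P' : PExp A) : Prop :=
  Step P α P' ∨ (α = none ∧ P = P')

/-- R is a branching bisimulation. -/
def IsBranchingBisim {A : Type} (R : PExp A → PExp A → Prop) : Prop :=
  Symmetric R ∧ ∀ P Q, R P Q → ∀ α P', Step P α P' →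
    ∃ Q'' Q', TauSteps Q Q'' ∧ OptStep Q'' α Q' ∧ R P Q'' ∧ R P' Q'

/-- Branching bisimilarity. -/
def BBisim {A : Type} (P Q : PExp A) : Prop :=
  ∃ R, IsBranchingBisim R ∧ R P Q

/-- R is a weak bisimulation. -/
def IsWeakBisim {A : Type} (R : PExp A → PExp A → Prop) : Prop :=
  Symmetric R ∧ ∀ P Q, R P Q → ∀ α P', Step P α P' →
    ∃ Q'' Q''' Q', TauSteps Q Q'' ∧ OptStep Q'' α Q''' ∧ TauSteps Q''' Q' ∧ R P' Q'

/-- Weak bisimilarity. -/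
def WBisim {A : Type} (P Q : PExp A) : Prop :=
  ∃ R, IsWeakBisim R ∧ R P Q

/-- A step with some label. -/
def AnyStep {A : Type} (P Q : PExp A) : Prop := ∃ α, Step P α Q

/-- Reachability: reflexive-transitive closure of the one-step transition relation. -/
def Reaches {A : Type} : PExp A → PExp A → Prop := Relation.ReflTransGen AnyStep

/-- P has no outgoing transitions. -/
def Deadlock {A : Type} (P : PExp A) : Prop := ∀ α Q, ¬ Step P α Q

/-- P can reach a deadlocked expression. -/
def WeaklyNormed {A : Type} (P : PExp A) : Prop := ∃ P', Reaches P P' ∧ Deadlock P'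

/-- `NormWitness P k`: there is a complete transition sequence from P to a deadlocked
expression containing exactly k non-τ transitions. -/
inductive NormWitness {A : Type} : PExp A → ℕ → Prop
  | dead {P} : Deadlock P → NormWitness P 0
  | tau {P P' k} : Step P none P' → NormWitness P' k → NormWitness P k
  | act {P a P' k} : Step P (some a) P' → NormWitness P' k → NormWitness P (k + 1)

/-- The weak norm of P is k: k is the least number of non-τ transitions in a complete
transition sequence from P. -/
def IsWeakNorm {A : Type} (P : PExp A) (k : ℕ) : Prop :=
  NormWitness P k ∧ ∀ j, NormWitness P j → k ≤ j

/-- P ⇒a Q : a weak a-step (a ≠ τ), absorbing τ-steps on both sides. -/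
def WStep {A : Type} (P : PExp A) (a : A) (Q : PExp A) : Prop :=
  ∃ P₁ Q₁, TauSteps P P₁ ∧ Step P₁ (some a) Q₁ ∧ TauSteps Q₁ Q

/-- `WChain P k`: there is a sequence of k weak (non-τ) steps starting from P. -/
inductive WChain {A : Type} : PExp A → ℕ → Prop
  | zero (P) : WChain P 0
  | succ {P a P' k} : WStep P a P' → WChain P' k → WChain P (k + 1)

/-- P is weakly bounded: some k bounds the number of non-τ steps of every sequence. -/
def WeaklyBounded {A : Type} (P : PExp A) : Prop := ∃ k, ∀ l, WChain P l → l ≤ k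

/-- The weak depth of P is k: the length of a longest transition sequence from P not
counting τ-transitions. -/
def IsWeakDepth {A : Type} (P : PExp A) (k : ℕ) : Prop :=
  WChain P k ∧ ∀ l, WChain P l → l ≤ k

/-- Indecomposability with respect to a behavioural equivalence E: P is not equivalent
to 0 nor to a parallel composition of two processes not equivalent to 0. -/
def IndecompWith {A : Type} (E : PExp A → PExp A → Prop) (P : PExp A) : Prop :=
  ¬ E P PExp.nil ∧ ∀ Q R, E P (PExp.par Q R) → E Q PExp.nil ∨ E R PExp.nil

end PExp

open PExp

/-- Syntactic size measure. -/
def sizeP {A : Type} : PExp A → ℕ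
  | PExp.nil => 1
  | PExp.pre _ P => sizeP P + 1
  | PExp.choice P Q => sizeP P + sizeP Q + 1
  | PExp.par P Q => sizeP P + sizeP Q + 1
  | PExp.star _ P => sizeP P + 1

lemma step_size_lt_or_eq {A : Type} {P : PExp A} {α : Option A} {P' : PExp A}
    (h : Step P α P') : sizeP P' < sizeP P ∨ P' = P := by
  induction h with
  | pre α P => left; simp [sizeP]
  | choiceL Q h ih =>
      left
      rcases ih with hlt | rfl
      · simp [sizeP]; omega
      · simp [sizeP]
  | choiceR P h ih =>
      left
      rcases ih with hlt | rfl
      · simp [sizeP]; omega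
      · simp [sizeP]
  | parL Q h ih =>
      rcases ih with hlt | rfl
      · left; simp [sizeP]; omega
      · right; rfl
  | parR P h ih =>
      rcases ih with hlt | rfl
      · left; simp [sizeP]; omega
      · right; rfl
  | star α P => right; rfl
  | starStep α h ih =>
      left
      rcases ih with hlt | rfl
      · simp [sizeP]; omega
      · simp [sizeP]

/-- Every infinite transition sequence is eventually constant: infinite behaviour only
arises from the self-loops of iteration prefixes. -/
theorem infinite_sequence_eventually_constant (A : Type)
    (P : ℕ → PExp A) (α : ℕ → Option A)
    (h : ∀ i, Step (P i) (α i) (P (i + 1))) :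
    ∃ j, ∀ k l, j ≤ k → j ≤ l → P k = P l := by
  have hmono : ∀ i, sizeP (P (i + 1)) ≤ sizeP (P i) := by
    intro i
    rcases step_size_lt_or_eq (h i) with hlt | heq
    · exact hlt.le
    · rw [heq]
  set f : ℕ → ℕ := fun i => sizeP (P i) with hf
  have hne : (Set.range f).Nonempty := ⟨f 0, 0, rfl⟩
  obtain ⟨j, hj⟩ : ∃ j, f j = sInf (Set.range f) := Nat.sInf_mem hne
  have hconst : ∀ k, j ≤ k → f k = f j := by
    intro k hk
    induction k with
    | zero => exact congrArg f (Nat.le_zero.mp hk).symm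
    | succ n ih =>
        rcases Nat.lt_or_ge j (n + 1) with hlt | hge
        · have hn : j ≤ n := Nat.lt_succ_iff.mp hlt
          have h1 : f (n + 1) ≤ f j := (hmono n).trans (ih hn).le
          have h2 : f j ≤ f (n + 1) := hj ▸ Nat.sInf_le ⟨n + 1, rfl⟩
          omega
        · exact congrArg f (Nat.le_antisymm hk hge).symm
  have hPconst : ∀ k, j ≤ k → P k = P j := by
    intro k hk
    induction k with
    | zero => exact congrArg P (Nat.le_zero.mp hk).symm
    | succ n ih =>
        rcases Nat.lt_or_ge j (n + 1) with hlt | hge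
        · have hn : j ≤ n := Nat.lt_succ_iff.mp hlt
          rcases step_size_lt_or_eq (h n) with hlt' | heq
          · exfalso
            have h1 := hconst n hn
            have h2 := hconst (n + 1) (by omega)
            have h3 : f (n + 1) < f n := hlt'
            omega
          · rw [heq]; exact ih hn
        · exact congrArg P (by omega)

  exact ⟨j, fun k l hk hl => (hPconst k hk).trans (hPconst l hl).symm⟩
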